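/- For each integer n ≥ 8 with n ≡ 2 or 4 (mod 6), there exists a K_3-divisible graph G of order n whose complement has exactly n + 2 edges and which has no K_3-decomposition. -/

import Mathlib

open Finset SimpleGraph

/-- A graph is `K_k`-divisible if `k(k-1)/2` divides its number of edges and `k-1`
divides every vertex degree. -/
def KkDivisible {V : Type*} (k : ℕ) (G : SimpleGraph V) : Prop :=
  (k * (k - 1) / 2) ∣ G.edgeSet.ncard ∧ ∀ x : V, (k - 1) ∣ (G.neighborSet x).ncard

/-- A `K_k`-decomposition of `G`: a set of `k`-cliques of `G` (i.e. subgraphs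
isomorphic to `K_k`) such that every edge of `G` lies in exactly one of them. -/
def HasKkDecomposition {V : Type*} (k : ℕ) (G : SimpleGraph V) : Prop :=
  ∃ D : Set (Finset V),
    (∀ A ∈ D, A.card = k ∧ ∀ x ∈ A, ∀ y ∈ A, x ≠ y → G.Adj x y) ∧
    (∀ x y : V, G.Adj x y → ∃! A, A ∈ D ∧ x ∈ A ∧ y ∈ A)

/-- The ordered adjacency relation of the graph `H` that we use as a complement:
a star from `0` to everything `≥ 3`, the edge `{1,2}` and a 4-cycle `3-4-5-6`. -/
def Hrel (a b : ℕ) : Prop :=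
  (a = 0 ∧ 3 ≤ b) ∨ (a = 1 ∧ b = 2) ∨ (a = 3 ∧ b = 4) ∨ (a = 4 ∧ b = 5) ∨
    (a = 5 ∧ b = 6) ∨ (a = 3 ∧ b = 6)

instance (a b : ℕ) : Decidable (Hrel a b) := by unfold Hrel; infer_instance

/-- The graph whose complement we use. -/
def Hgraph (n : ℕ) : SimpleGraph (Fin n) where
  Adj x y := Hrel x.val y.val ∨ Hrel y.val x.val
  symm := ⟨fun _ _ h => Or.symm h⟩
  loopless := ⟨fun x h => by rcases h with h | h <;> (unfold Hrel at h; omega)⟩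

lemma Hgraph_adj {n : ℕ} (x y : Fin n) :
    (Hgraph n).Adj x y ↔ Hrel x.val y.val ∨ Hrel y.val x.val := Iff.rfl

instance (n : ℕ) : DecidableRel (Hgraph n).Adj := fun x y =>
  inferInstanceAs (Decidable (Hrel x.val y.val ∨ Hrel y.val x.val))

/-- Degree function of `Hgraph n` as a function of the vertex value. -/
def dfun (n a : ℕ) : ℕ :=
  if a = 0 then n - 3 else if a = 1 ∨ a = 2 ∨ 7 ≤ a then 1 else 3

lemma Hgraph_degree {n : ℕ} (hn : 8 ≤ n) (x : Fin n) :
    (Hgraph n).degree x = dfun n x.val := by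
  have hxlt := x.isLt
  rw [SimpleGraph.degree]
  rcases (show x.val = 0 ∨ x.val = 1 ∨ x.val = 2 ∨ x.val = 3 ∨ x.val = 4 ∨ x.val = 5 ∨
      x.val = 6 ∨ 7 ≤ x.val by omega) with hx | hx | hx | hx | hx | hx | hx | hx
  · -- x = 0 : neighbors are all y with 3 ≤ y.val
    have h1 : (Hgraph n).neighborFinset x =
        univ \ ({⟨0, by omega⟩, ⟨1, by omega⟩, ⟨2, by omega⟩} : Finset (Fin n)) := by
      ext y
      simp only [mem_neighborFinset, mem_sdiff, mem_univ, true_and, mem_insert, mem_singleton,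
        Fin.ext_iff, Hgraph_adj]
      unfold Hrel
      rw [hx]
      constructor
      · intro h; omega
      · intro h; exact Or.inl (Or.inl ⟨rfl, by omega⟩)
    rw [h1, card_sdiff_of_subset (subset_univ _), card_univ, Fintype.card_fin,
      card_insert_of_notMem (by simp [Fin.ext_iff]),
      card_insert_of_notMem (by simp [Fin.ext_iff]), card_singleton]
    simp only [dfun, hx]
    norm_num
  · -- x = 1 : neighbor is 2
    have h1 : (Hgraph n).neighborFinset x = ({⟨2, by omega⟩} : Finset (Fin n)) := by
      ext y
      simp only [mem_neighborFinset, mem_singleton, Fin.ext_iff, Hgraph_adj]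
      unfold Hrel
      rw [hx]
      omega
    rw [h1, card_singleton]
    simp only [dfun, hx]
    norm_num
  · -- x = 2 : neighbor is 1
    have h1 : (Hgraph n).neighborFinset x = ({⟨1, by omega⟩} : Finset (Fin n)) := by
      ext y
      simp only [mem_neighborFinset, mem_singleton, Fin.ext_iff, Hgraph_adj]
      unfold Hrel
      rw [hx]
      omega
    rw [h1, card_singleton]
    simp only [dfun, hx]
    norm_num
  · -- x = 3 : neighbors 0, 4, 6
    have h1 : (Hgraph n).neighborFinset x =
        ({⟨0, by omega⟩, ⟨4, by omega⟩, ⟨6, by omega⟩} : Finset (Fin n)) := by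
      ext y
      simp only [mem_neighborFinset, mem_insert, mem_singleton, Fin.ext_iff, Hgraph_adj]
      unfold Hrel
      rw [hx]
      omega
    rw [h1, card_insert_of_notMem (by simp [Fin.ext_iff]),
      card_insert_of_notMem (by simp [Fin.ext_iff]), card_singleton]
    simp only [dfun, hx]
    norm_num
  · -- x = 4 : neighbors 0, 3, 5
    have h1 : (Hgraph n).neighborFinset x =
        ({⟨0, by omega⟩, ⟨3, by omega⟩, ⟨5, by omega⟩} : Finset (Fin n)) := by
      ext y
      simp only [mem_neighborFinset, mem_insert, mem_singleton, Fin.ext_iff, Hgraph_adj]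
      unfold Hrel
      rw [hx]
      omega
    rw [h1, card_insert_of_notMem (by simp [Fin.ext_iff]),
      card_insert_of_notMem (by simp [Fin.ext_iff]), card_singleton]
    simp only [dfun, hx]
    norm_num
  · -- x = 5 : neighbors 0, 4, 6
    have h1 : (Hgraph n).neighborFinset x =
        ({⟨0, by omega⟩, ⟨4, by omega⟩, ⟨6, by omega⟩} : Finset (Fin n)) := by
      ext y
      simp only [mem_neighborFinset, mem_insert, mem_singleton, Fin.ext_iff, Hgraph_adj]
      unfold Hrel
      rw [hx]
      omega
    rw [h1, card_insert_of_notMem (by simp [Fin.ext_iff]),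
      card_insert_of_notMem (by simp [Fin.ext_iff]), card_singleton]
    simp only [dfun, hx]
    norm_num
  · -- x = 6 : neighbors 0, 3, 5
    have h1 : (Hgraph n).neighborFinset x =
        ({⟨0, by omega⟩, ⟨3, by omega⟩, ⟨5, by omega⟩} : Finset (Fin n)) := by
      ext y
      simp only [mem_neighborFinset, mem_insert, mem_singleton, Fin.ext_iff, Hgraph_adj]
      unfold Hrel
      rw [hx]
      omega
    rw [h1, card_insert_of_notMem (by simp [Fin.ext_iff]),
      card_insert_of_notMem (by simp [Fin.ext_iff]), card_singleton]
    simp only [dfun, hx]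
    norm_num
  · -- x ≥ 7 : neighbor is 0
    have h1 : (Hgraph n).neighborFinset x = ({⟨0, by omega⟩} : Finset (Fin n)) := by
      ext y
      simp only [mem_neighborFinset, mem_singleton, Fin.ext_iff, Hgraph_adj]
      unfold Hrel
      constructor
      · intro h; omega
      · intro h; exact Or.inr (Or.inl ⟨h, by omega⟩)
    rw [h1, card_singleton]
    simp only [dfun]
    rw [if_neg (by omega), if_pos (by omega)]

lemma Hgraph_card_edges {n : ℕ} (hn : 8 ≤ n) : (Hgraph n).edgeFinset.card = n + 2 := by
  have hsum := (Hgraph n).sum_degrees_eq_twice_card_edges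
  have h1 : ∑ v : Fin n, (Hgraph n).degree v = ∑ v : Fin n, dfun n v.val :=
    Finset.sum_congr rfl fun v _ => Hgraph_degree hn v
  have h2 : ∑ v : Fin n, dfun n v.val = ∑ i ∈ Finset.range n, dfun n i :=
    Fin.sum_univ_eq_sum_range (dfun n) n
  have h3 : ∑ i ∈ Finset.range 7, dfun n i + ∑ i ∈ Finset.Ico 7 n, dfun n i =
      ∑ i ∈ Finset.range n, dfun n i := Finset.sum_range_add_sum_Ico _ (by omega)
  have h4 : ∑ i ∈ Finset.range 7, dfun n i = (n - 3) + 14 := by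
    simp [Finset.sum_range_succ, dfun]
  have h5 : ∑ i ∈ Finset.Ico 7 n, dfun n i = n - 7 := by
    have he : ∀ i ∈ Finset.Ico 7 n, dfun n i = 1 := by
      intro i hi
      simp only [Finset.mem_Ico] at hi
      simp only [dfun]
      rw [if_neg (by omega), if_pos (by omega)]
    rw [Finset.sum_congr rfl he, Finset.sum_const, Nat.card_Ico, smul_eq_mul, mul_one]
  omega

lemma Hgraph_edgeSet_ncard {n : ℕ} (hn : 8 ≤ n) : (Hgraph n).edgeSet.ncard = n + 2 := by
  rw [← Nat.card_coe_set_eq, Nat.card_eq_fintype_card, ← edgeFinset_card]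
  exact Hgraph_card_edges hn

set_option maxHeartbeats 2000000 in
/-- For each `n ≥ 8` with `n ≡ 2` or `4 (mod 6)` there is a `K_3`-divisible graph of
order `n` whose complement has exactly `n + 2` edges and which has no
`K_3`-decomposition. -/
theorem nondecomposable_K3_two_four_mod_six (n : ℕ) (hn : 8 ≤ n)
    (hmod : n % 6 = 2 ∨ n % 6 = 4) :
    ∃ G : SimpleGraph (Fin n), KkDivisible 3 G ∧
      Gᶜ.edgeSet.ncard = n + 2 ∧ ¬ HasKkDecomposition 3 G := by
  classical
  refine ⟨(Hgraph n)ᶜ, ⟨?_, ?_⟩, ?_, ?_⟩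
  · -- 3 ∣ number of edges
    show (3 * (3 - 1) / 2) ∣ ((Hgraph n)ᶜ.edgeSet.ncard)
    have hunion : (Hgraph n).edgeSet ∪ (Hgraph n)ᶜ.edgeSet =
        (⊤ : SimpleGraph (Fin n)).edgeSet := by
      rw [← edgeSet_sup, sup_compl_eq_top]
    have hdisj : Disjoint (Hgraph n).edgeSet ((Hgraph n)ᶜ.edgeSet) :=
      disjoint_edgeSet.mpr disjoint_compl_right
    have hadd := Set.ncard_union_eq hdisj (Set.toFinite _) (Set.toFinite _)
    rw [hunion] at hadd
    have htopcard : (⊤ : SimpleGraph (Fin n)).edgeSet.ncard = n * (n - 1) / 2 := by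
      rw [← Nat.card_coe_set_eq, Nat.card_eq_fintype_card, ← edgeFinset_card,
        card_edgeFinset_top_eq_card_choose_two, Fintype.card_fin, Nat.choose_two_right]
    rw [htopcard, Hgraph_edgeSet_ncard hn] at hadd
    norm_num
    rcases hmod with hm | hm
    · obtain ⟨k, hk⟩ : ∃ k, n = 6 * k + 2 := ⟨n / 6, by omega⟩
      have h1 : n - 1 = 6 * k + 1 := by omega
      have h2 : n * (n - 1) = 2 * (18 * (k * k) + 9 * k + 1) := by rw [h1, hk]; ring
      have h3 : n * (n - 1) / 2 = 18 * (k * k) + 9 * k + 1 := by omega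
      rw [h3] at hadd
      exact ⟨6 * (k * k) + k - 1, by omega⟩
    · obtain ⟨k, hk⟩ : ∃ k, n = 6 * k + 4 := ⟨n / 6, by omega⟩
      have h1 : n - 1 = 6 * k + 3 := by omega
      have h2 : n * (n - 1) = 2 * (18 * (k * k) + 21 * k + 6) := by rw [h1, hk]; ring
      have h3 : n * (n - 1) / 2 = 18 * (k * k) + 21 * k + 6 := by omega
      rw [h3] at hadd
      exact ⟨6 * (k * k) + 5 * k, by omega⟩
  · -- all degrees even
    intro x
    show 2 ∣ ((Hgraph n)ᶜ.neighborSet x).ncard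
    have hcard : ((Hgraph n)ᶜ.neighborSet x).ncard = (Hgraph n)ᶜ.degree x := by
      rw [← Nat.card_coe_set_eq, Nat.card_eq_fintype_card, card_neighborSet_eq_degree]
    rw [hcard, degree_compl, Fintype.card_fin, Hgraph_degree hn x]
    have hxlt := x.isLt
    simp only [dfun]
    split_ifs <;> omega
  · -- complement has n + 2 edges
    rw [compl_compl]
    exact Hgraph_edgeSet_ncard hn
  · -- no K3-decomposition
    rintro ⟨D, hD, huniq⟩
    set v0 : Fin n := ⟨0, by omega⟩ with hv0
    set v1 : Fin n := ⟨1, by omega⟩ with hv1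
    have hval0 : (v0 : ℕ) = 0 := rfl
    have hval1 : (v1 : ℕ) = 1 := rfl
    have hadj01 : (Hgraph n)ᶜ.Adj v0 v1 := by
      rw [compl_adj]
      refine ⟨by simp [hv0, hv1, Fin.ext_iff], ?_⟩
      rw [Hgraph_adj]
      unfold Hrel
      rw [hval0, hval1]
      omega
    obtain ⟨A, ⟨hAD, h0A, h1A⟩, -⟩ := huniq _ _ hadj01
    obtain ⟨hcard3, hclique⟩ := hD A hAD
    obtain ⟨x, hxA, hx0, hx1⟩ : ∃ x ∈ A, x ≠ v0 ∧ x ≠ v1 := by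
      by_contra hcon
      push_neg at hcon
      have hsub : A ⊆ ({v0, v1} : Finset (Fin n)) := by
        intro y hy
        by_cases hy0 : y = v0
        · simp [hy0]
        · simp [hcon y hy hy0]
      have hle1 := Finset.card_le_card hsub
      have hle2 : ({v0, v1} : Finset (Fin n)).card ≤ 2 :=
        (Finset.card_insert_le _ _).trans (by simp)
      omega
    have hadj0x : (Hgraph n)ᶜ.Adj v0 x := hclique _ h0A _ hxA (fun h => hx0 h.symm)
    have hadj1x : (Hgraph n)ᶜ.Adj v1 x := hclique _ h1A _ hxA (fun h => hx1 h.symm)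
    rw [compl_adj] at hadj0x hadj1x
    have hx0' : x.val ≠ 0 := fun h => hx0 (Fin.ext (h.trans hval0.symm))
    have hx1' : x.val ≠ 1 := fun h => hx1 (Fin.ext (h.trans hval1.symm))
    have hxlt := x.isLt
    have hnadj0 := hadj0x.2
    have hnadj1 := hadj1x.2
    rw [Hgraph_adj] at hnadj0 hnadj1
    unfold Hrel at hnadj0 hnadj1
    rw [hval0] at hnadj0
    rw [hval1] at hnadj1
    push_neg at hnadj0 hnadj1
    have ha : (x : ℕ) < 3 := hnadj0.1.1 rfl
    have hb : (x : ℕ) ≠ 2 := hnadj1.1.2.1 rfl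
    clear hnadj0 hnadj1 hadj0x hadj1x
    omega
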